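/- Let X be a normed space, C ⊆ X nonempty convex, T : C → C nonexpansive, and (λ_n)_{n≥1} ⊆ [0,1] with rate of convergence α of λ_n → 0, Cauchy modulus β of s_n := ∑_{i=1}^n |λ_{i+1}-λ_i|, and rate of divergence θ of ∑ λ_n. Let x ∈ C with Halpern iteration (x_n) bounded, and M ∈ ℕ* with M ≥ ‖x_n‖ + ‖x‖ + ‖Tx‖ for all n ≥ 1. Then for all ε ∈ (0,2) and all n ≥ Φ := max{ θ(β(ε/(8M)) + 1 + ⌈ln(8M/ε)⌉), α(ε/(4M)) }, we have ‖x_n - T x_n‖ < ε. -/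

import Mathlib

theorem halpern_rate_of_asymptotic_regularity
    {X : Type*} [NormedAddCommGroup X] [NormedSpace ℝ X]
    (C : Set X) (hC : C.Nonempty) (hconv : Convex ℝ C)
    (T : X → X) (hTmaps : Set.MapsTo T C C)
    (hT : ∀ u ∈ C, ∀ v ∈ C, ‖T u - T v‖ ≤ ‖u - v‖)
    (lam : ℕ → ℝ) (hlam : ∀ n ≥ 1, lam n ∈ Set.Icc (0:ℝ) 1)
    (x₀ : X) (hx₀ : x₀ ∈ C) (x : ℕ → X) (hx0 : x 0 = x₀)
    (hrec : ∀ n : ℕ, x (n + 1) = lam (n + 1) • x₀ + (1 - lam (n + 1)) • T (x n))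
    (α : ℝ → ℕ) (hαpos : ∀ ε > (0:ℝ), 1 ≤ α ε)
    (hα : ∀ ε > (0:ℝ), ∀ n : ℕ, α ε ≤ n → |lam n| < ε)
    (β : ℝ → ℕ) (hβpos : ∀ ε > (0:ℝ), 1 ≤ β ε)
    (hβ : ∀ ε > (0:ℝ), ∀ n : ℕ, 1 ≤ n →
      (∑ i ∈ Finset.Icc 1 (β ε + n), |lam (i + 1) - lam i|)
        - (∑ i ∈ Finset.Icc 1 (β ε), |lam (i + 1) - lam i|) < ε)
    (θ : ℕ → ℕ) (hθpos : ∀ n : ℕ, 1 ≤ n → 1 ≤ θ n)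
    (hθ : ∀ n : ℕ, 1 ≤ n → (n : ℝ) ≤ ∑ i ∈ Finset.Icc 1 (θ n), lam i)
    (M : ℕ) (hMpos : 1 ≤ M)
    (hM : ∀ n ≥ 1, ‖x n‖ + ‖x₀‖ + ‖T x₀‖ ≤ (M : ℝ)) :
    ∀ ε : ℝ, 0 < ε → ε < 2 →
      ∀ n : ℕ,
        max (θ (β (ε / (8 * M)) + 1 + ⌈Real.log (8 * M / ε)⌉₊)) (α (ε / (4 * M))) ≤ n →
        ‖x n - T (x n)‖ < ε := by
  have hM0 : (0:ℝ) < M := by exact_mod_cast hMpos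
  -- membership
  have hxC : ∀ m, x m ∈ C := by
    intro m
    induction m with
    | zero => rw [hx0]; exact hx₀
    | succ m ih =>
      rw [hrec m]
      have h1 := hlam (m+1) (by omega)
      exact hconv hx₀ (hTmaps ih) h1.1 (by linarith [h1.2]) (by ring)
  -- basic bounds
  have hx0M : ‖x₀‖ + ‖T x₀‖ ≤ (M:ℝ) := by
    have := hM 1 le_rfl; have := norm_nonneg (x 1); linarith
  have hxM : ∀ m, ‖x m‖ ≤ (M:ℝ) := by
    intro m
    match m with
    | 0 =>
      rw [hx0]; have := norm_nonneg (T x₀); linarith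
    | (m+1) =>
      have := hM (m+1) (by omega)
      have := norm_nonneg x₀; have := norm_nonneg (T x₀); linarith
  have hTxM : ∀ m, ‖T (x m)‖ ≤ (M:ℝ) := by
    intro m
    match m with
    | 0 =>
      rw [hx0]; have := norm_nonneg x₀; linarith
    | (m+1) =>
      have h1 : ‖T (x (m+1)) - T x₀‖ ≤ ‖x (m+1) - x₀‖ := hT _ (hxC _) _ hx₀
      have h2 : ‖T (x (m+1))‖ ≤ ‖T (x (m+1)) - T x₀‖ + ‖T x₀‖ := by
        simpa using norm_add_le (T (x (m+1)) - T x₀) (T x₀)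
      have h3 : ‖x (m+1) - x₀‖ ≤ ‖x (m+1)‖ + ‖x₀‖ := norm_sub_le _ _
      have := hM (m+1) (by omega)
      linarith
  have hbound : ∀ m, ‖x₀ - T (x m)‖ ≤ 2 * M := by
    intro m
    have := norm_sub_le x₀ (T (x m))
    have := hTxM m
    have hx0' : ‖x₀‖ ≤ (M:ℝ) := by have := norm_nonneg (T x₀); linarith
    linarith
  have haM : ∀ m, ‖x (m+1) - x m‖ ≤ 2 * M := by
    intro m
    have := norm_sub_le (x (m+1)) (x m)
    have := hxM (m+1); have := hxM m; linarith
  -- recursive inequality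
  have hrecin : ∀ m : ℕ, 1 ≤ m →
      ‖x (m+1) - x m‖ ≤ (1 - lam (m+1)) * ‖x m - x (m-1)‖ + |lam (m+1) - lam m| * (2*M) := by
    intro m hm
    obtain ⟨p, rfl⟩ : ∃ p, m = p + 1 := ⟨m - 1, by omega⟩
    have hxm : x (p+1) = lam (p+1) • x₀ + (1 - lam (p+1)) • T (x p) := hrec p
    have hxm1 : x (p+2) = lam (p+2) • x₀ + (1 - lam (p+2)) • T (x (p+1)) := hrec (p+1)
    have hdec : x (p+2) - x (p+1)
        = (lam (p+2) - lam (p+1)) • (x₀ - T (x p))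
          + (1 - lam (p+2)) • (T (x (p+1)) - T (x p)) := by
      rw [hxm1, hxm]; module
    have h1 : ‖x (p+2) - x (p+1)‖
        ≤ |lam (p+2) - lam (p+1)| * ‖x₀ - T (x p)‖
          + |1 - lam (p+2)| * ‖T (x (p+1)) - T (x p)‖ := by
      rw [hdec]
      calc _ ≤ ‖(lam (p+2) - lam (p+1)) • (x₀ - T (x p))‖
              + ‖(1 - lam (p+2)) • (T (x (p+1)) - T (x p))‖ := norm_add_le _ _
        _ = _ := by rw [norm_smul, norm_smul, Real.norm_eq_abs, Real.norm_eq_abs]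
    have hl2 := hlam (p+2) (by omega)
    have habs : |1 - lam (p+2)| = 1 - lam (p+2) := abs_of_nonneg (by linarith [hl2.2])
    have hTle : ‖T (x (p+1)) - T (x p)‖ ≤ ‖x (p+1) - x p‖ := hT _ (hxC _) _ (hxC _)
    have hb := hbound p
    have hnn : (0:ℝ) ≤ |lam (p+2) - lam (p+1)| := abs_nonneg _
    have hnn2 : (0:ℝ) ≤ 1 - lam (p+2) := by linarith [hl2.2]
    simp only [show p+1+1 = p+2 from rfl, show p+1-1 = p from rfl]
    calc ‖x (p+2) - x (p+1)‖
        ≤ |lam (p+2) - lam (p+1)| * ‖x₀ - T (x p)‖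
          + |1 - lam (p+2)| * ‖T (x (p+1)) - T (x p)‖ := h1
      _ ≤ |lam (p+2) - lam (p+1)| * (2*M) + (1 - lam (p+2)) * ‖x (p+1) - x p‖ := by
          rw [habs]
          gcongr
      _ = (1 - lam (p+2)) * ‖x (p+1) - x p‖ + |lam (p+2) - lam (p+1)| * (2*M) := by ring
  -- unfolded inequality
  have hmain : ∀ k : ℕ, 1 ≤ k → ∀ j : ℕ,
      ‖x (k+j+1) - x (k+j)‖
        ≤ (∏ i ∈ Finset.Icc (k+1) (k+j), (1 - lam (i+1))) * (2*M)
          + (∑ i ∈ Finset.Icc (k+1) (k+j), |lam (i+1) - lam i|) * (2*M) := by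
    intro k hk j
    induction j with
    | zero =>
      have he : Finset.Icc (k+1) (k+0) = ∅ := Finset.Icc_eq_empty (by omega)
      rw [he]
      simpa using haM k
    | succ j ih =>
      rw [show k + (j+1) = k + j + 1 from rfl]
      have hstep := hrecin (k+j+1) (by omega)
      have hsplit1 : ∏ i ∈ Finset.Icc (k+1) (k+j+1), (1 - lam (i+1))
          = (∏ i ∈ Finset.Icc (k+1) (k+j), (1 - lam (i+1))) * (1 - lam (k+j+1+1)) :=
        Finset.prod_Icc_succ_top (by omega) _
      have hsplit2 : ∑ i ∈ Finset.Icc (k+1) (k+j+1), |lam (i+1) - lam i|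
          = (∑ i ∈ Finset.Icc (k+1) (k+j), |lam (i+1) - lam i|) + |lam (k+j+1+1) - lam (k+j+1)| :=
        Finset.sum_Icc_succ_top (by omega) _
      have hl := hlam (k+j+1+1) (by omega)
      have h1l : 0 ≤ 1 - lam (k+j+1+1) := by linarith [hl.2]
      have h1l' : 1 - lam (k+j+1+1) ≤ 1 := by linarith [hl.1]
      have hPnn : 0 ≤ ∏ i ∈ Finset.Icc (k+1) (k+j), (1 - lam (i+1)) := by
        apply Finset.prod_nonneg
        intro i hi
        have := hlam (i+1) (by omega)
        linarith [this.2]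
      have hSnn : 0 ≤ ∑ i ∈ Finset.Icc (k+1) (k+j), |lam (i+1) - lam i| :=
        Finset.sum_nonneg fun i _ => abs_nonneg _
      have hnrm : 0 ≤ ‖x (k+j+1) - x (k+j)‖ := norm_nonneg _
      have hkj : k+j+1-1 = k+j := by omega
      rw [hkj] at hstep
      rw [hsplit1, hsplit2]
      have h2M : (0:ℝ) ≤ 2*M := by linarith
      have e1 : (1 - lam (k+j+1+1)) * ‖x (k+j+1) - x (k+j)‖
          ≤ (1 - lam (k+j+1+1)) * ((∏ i ∈ Finset.Icc (k+1) (k+j), (1 - lam (i+1))) * (2*M)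
            + (∑ i ∈ Finset.Icc (k+1) (k+j), |lam (i+1) - lam i|) * (2*M)) :=
        mul_le_mul_of_nonneg_left ih h1l
      have e2 : (1 - lam (k+j+1+1)) *
          ((∑ i ∈ Finset.Icc (k+1) (k+j), |lam (i+1) - lam i|) * (2*M))
          ≤ (∑ i ∈ Finset.Icc (k+1) (k+j), |lam (i+1) - lam i|) * (2*M) := by
        nlinarith [mul_nonneg hSnn h2M]
      nlinarith [hstep, e1, e2]
  -- main argument
  intro ε hε hε2 n hn
  have h8M : (0:ℝ) < 8 * M := by linarith
  have h4M : (0:ℝ) < 4 * M := by linarith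
  have hεb : (0:ℝ) < ε / (8 * M) := div_pos hε h8M
  have hεa : (0:ℝ) < ε / (4 * M) := div_pos hε h4M
  set k := β (ε / (8 * M)) with hkdef
  have hk1 : 1 ≤ k := hβpos _ hεb
  set L := ⌈Real.log (8 * M / ε)⌉₊ with hLdef
  -- θ m ≥ m
  have hθge : ∀ m : ℕ, 1 ≤ m → m ≤ θ m := by
    intro m hm
    have h1 := hθ m hm
    have h2 : ∑ i ∈ Finset.Icc 1 (θ m), lam i ≤ ∑ i ∈ Finset.Icc 1 (θ m), (1:ℝ) := by
      apply Finset.sum_le_sum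
      intro i hi
      exact (hlam i (Finset.mem_Icc.mp hi).1).2
    rw [Finset.sum_const, Nat.card_Icc] at h2
    have : (m:ℝ) ≤ (θ m : ℝ) := by
      simp only [nsmul_eq_mul, mul_one] at h2
      calc (m:ℝ) ≤ _ := h1
        _ ≤ ((θ m + 1 - 1 : ℕ) : ℝ) := h2
        _ = (θ m : ℝ) := by norm_num
    exact_mod_cast this
  have hnN : θ (k + 1 + L) ≤ n := le_trans (le_max_left _ _) hn
  have hkLn : k + 1 + L ≤ n := le_trans (hθge _ (by omega)) hnN
  obtain ⟨j, rfl⟩ : ∃ j, n = k + j := ⟨n - k, by omega⟩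
  have hj1 : 1 ≤ j := by omega
  -- the difference-sum is small
  have hsum : (∑ i ∈ Finset.Icc (k+1) (k+j), |lam (i+1) - lam i|) < ε / (8 * M) := by
    have h := hβ _ hεb j hj1
    have hsplit : (∑ i ∈ Finset.Ioc 0 k, |lam (i+1) - lam i|)
        + (∑ i ∈ Finset.Ioc k (k+j), |lam (i+1) - lam i|)
        = ∑ i ∈ Finset.Ioc 0 (k+j), |lam (i+1) - lam i| :=
      Finset.sum_Ioc_consecutive _ (Nat.zero_le k) (by omega)
    rw [Finset.Icc_add_one_left_eq_Ioc]
    rw [show (1:ℕ) = 0 + 1 from rfl, Finset.Icc_add_one_left_eq_Ioc, Finset.Icc_add_one_left_eq_Ioc] at h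
    linarith
  -- the product is small
  have hTS : Real.log (8 * M / ε) ≤ ∑ i ∈ Finset.Icc (k+1) (k+j), lam (i+1) := by
    have hshift : ∑ i ∈ Finset.Icc (k+1) (k+j), lam (i+1)
        = ∑ i ∈ Finset.Icc (k+1+1) (k+j+1), lam i := by
      rw [← Finset.map_add_right_Icc (k+1) (k+j) 1, Finset.sum_map]
      rfl
    have hsplit : (∑ i ∈ Finset.Ioc 0 (k+1), lam i)
        + (∑ i ∈ Finset.Ioc (k+1) (k+j+1), lam i)
        = ∑ i ∈ Finset.Ioc 0 (k+j+1), lam i :=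
      Finset.sum_Ioc_consecutive _ (Nat.zero_le _) (by omega)
    have hmono : (∑ i ∈ Finset.Ioc 0 (θ (k+1+L)), lam i)
        + (∑ i ∈ Finset.Ioc (θ (k+1+L)) (k+j+1), lam i)
        = ∑ i ∈ Finset.Ioc 0 (k+j+1), lam i :=
      Finset.sum_Ioc_consecutive _ (Nat.zero_le _) (by omega)
    have htail : 0 ≤ ∑ i ∈ Finset.Ioc (θ (k+1+L)) (k+j+1), lam i := by
      apply Finset.sum_nonneg
      intro i hi
      exact (hlam i (by have := (Finset.mem_Ioc.mp hi).1; omega)).1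
    have hθbig : ((k+1+L : ℕ) : ℝ) ≤ ∑ i ∈ Finset.Ioc 0 (θ (k+1+L)), lam i := by
      rw [← Finset.Icc_add_one_left_eq_Ioc]
      exact hθ _ (by omega)
    have hS1 : ∑ i ∈ Finset.Ioc 0 (k+1), lam i ≤ ((k+1 : ℕ) : ℝ) := by
      rw [← Finset.Icc_add_one_left_eq_Ioc]
      calc ∑ i ∈ Finset.Icc (0+1) (k+1), lam i ≤ ∑ i ∈ Finset.Icc (0+1) (k+1), (1:ℝ) := by
            apply Finset.sum_le_sum
            intro i hi
            exact (hlam i (Finset.mem_Icc.mp hi).1).2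
        _ = ((k+1 : ℕ) : ℝ) := by
            rw [Finset.sum_const, Nat.card_Icc]
            simp
    have hLlog : Real.log (8 * M / ε) ≤ (L : ℝ) := Nat.le_ceil _
    have hcast : ((k+1+L : ℕ) : ℝ) = ((k+1:ℕ):ℝ) + (L:ℝ) := by push_cast; ring
    rw [hshift, Finset.Icc_add_one_left_eq_Ioc]
    linarith
  have hprod : (∏ i ∈ Finset.Icc (k+1) (k+j), (1 - lam (i+1))) ≤ ε / (8 * M) := by
    have h1 : (∏ i ∈ Finset.Icc (k+1) (k+j), (1 - lam (i+1)))
        ≤ ∏ i ∈ Finset.Icc (k+1) (k+j), Real.exp (-(lam (i+1))) := by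
      apply Finset.prod_le_prod
      · intro i hi
        have := hlam (i+1) (by omega)
        linarith [this.2]
      · intro i hi
        have := Real.add_one_le_exp (-(lam (i+1)))
        linarith
    have h2 : ∏ i ∈ Finset.Icc (k+1) (k+j), Real.exp (-(lam (i+1)))
        = Real.exp (∑ i ∈ Finset.Icc (k+1) (k+j), -(lam (i+1))) :=
      (Real.exp_sum _ _).symm
    have h3 : Real.exp (∑ i ∈ Finset.Icc (k+1) (k+j), -(lam (i+1)))
        ≤ Real.exp (-(Real.log (8 * M / ε))) := by
      apply Real.exp_le_exp.mpr
      rw [Finset.sum_neg_distrib]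
      linarith
    have h4 : Real.exp (-(Real.log (8 * M / ε))) = ε / (8 * M) := by
      rw [Real.exp_neg, Real.exp_log (by positivity)]
      rw [inv_div]
    linarith
  -- small displacement
  have hdisp : ‖x (k+j+1) - x (k+j)‖ < ε / 2 := by
    have h := hmain k hk1 j
    have h2M : (0:ℝ) < 2*M := by linarith
    have e1 : (∏ i ∈ Finset.Icc (k+1) (k+j), (1 - lam (i+1))) * (2*M)
        ≤ (ε / (8*M)) * (2*M) := by
      apply mul_le_mul_of_nonneg_right hprod (le_of_lt h2M)
    have e2 : (∑ i ∈ Finset.Icc (k+1) (k+j), |lam (i+1) - lam i|) * (2*M)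
        < (ε / (8*M)) * (2*M) := by
      apply mul_lt_mul_of_pos_right hsum h2M
    have : (ε / (8*M)) * (2*M) = ε / 4 := by
      field_simp
      ring
    linarith
  -- conclusion
  have hαn : |lam (k+j+1)| < ε / (4*M) := hα _ hεa (k+j+1) (by
    have := le_trans (le_max_right _ _) hn
    omega)
  have hdec2 : x (k+j+1) - T (x (k+j)) = lam (k+j+1) • (x₀ - T (x (k+j))) := by
    rw [hrec (k+j)]
    module
  have hterm2 : ‖x (k+j+1) - T (x (k+j))‖ < ε / 2 := by
    rw [hdec2, norm_smul, Real.norm_eq_abs]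
    have hb := hbound (k+j)
    have hbn : 0 ≤ ‖x₀ - T (x (k+j))‖ := norm_nonneg _
    have h2M : (0:ℝ) < 2*M := by linarith
    calc |lam (k+j+1)| * ‖x₀ - T (x (k+j))‖
        ≤ |lam (k+j+1)| * (2*M) := mul_le_mul_of_nonneg_left hb (abs_nonneg _)
      _ < (ε / (4*M)) * (2*M) := mul_lt_mul_of_pos_right hαn h2M
      _ = ε / 2 := by field_simp; ring
  have hfinal : x (k+j) - T (x (k+j))
      = (x (k+j) - x (k+j+1)) + (x (k+j+1) - T (x (k+j))) := by abel
  calc ‖x (k+j) - T (x (k+j))‖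
      ≤ ‖x (k+j) - x (k+j+1)‖ + ‖x (k+j+1) - T (x (k+j))‖ := by
        rw [hfinal]; exact norm_add_le _ _
    _ = ‖x (k+j+1) - x (k+j)‖ + ‖x (k+j+1) - T (x (k+j))‖ := by rw [norm_sub_rev]
    _ < ε / 2 + ε / 2 := add_lt_add hdisp hterm2
    _ = ε := by ring
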